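/- Proposition (Γ-convergence with varying right-hand sides): In the two-norm Setting with Assumptions (A1) and (A4) (Assumption (A5) is not needed), let g_n, g ∈ Y* with g_n converging weakly to g in Y*, and set f_n = g_n∘j ∈ X* and f = g∘j ∈ X*. Then the sequence of functionals (F_n^{f_n}) Γ-converges to F^f with respect to the weak topology of X, i.e.: (i) for every x ∈ X and every sequence (x_n) converging weakly to x in X, F^f(x) ≤ liminf_{n→∞} F_n^{f_n}(x_n); and (ii) for every x ∈ X there exists a sequence (x_n) converging weakly to x with F_n^{f_n}(x_n) → F^f(x). -/

import Mathlib

open Filter Topology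
open scoped Classical

/-- Weak convergence of a sequence in a normed space: convergence tested against
every continuous linear functional. -/
def WeakTendsto {X : Type*} [NormedAddCommGroup X] [NormedSpace ℝ X]
    (u : ℕ → X) (x : X) : Prop :=
  ∀ φ : X →L[ℝ] ℝ, Tendsto (fun n => φ (u n)) atTop (𝓝 (φ x))

/-- **Γ-convergence with varying right-hand sides.**
In the two-norm Deep Ritz setting with Assumptions (A1) and (A4), if
`g n ⇀ g₀` weakly in `Y*` and `f n = g n ∘ j`, `f₀ = g₀ ∘ j`, then the
functionals `(Fn (f n) n)` Γ-converge to `F f₀` with respect to the weak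
topology of `X`. -/
theorem deep_ritz_gamma_convergence_varying_rhs
    {X B Y : Type*} [NormedAddCommGroup X] [NormedSpace ℝ X] [CompleteSpace X]
    [NormedAddCommGroup B] [NormedSpace ℝ B] [CompleteSpace B]
    [NormedAddCommGroup Y] [NormedSpace ℝ Y] [CompleteSpace Y]
    (hXrefl : Function.Surjective (NormedSpace.inclusionInDoubleDual ℝ X))
    (hBrefl : Function.Surjective (NormedSpace.inclusionInDoubleDual ℝ B))
    (hYrefl : Function.Surjective (NormedSpace.inclusionInDoubleDual ℝ Y))
    (γ : X →L[ℝ] B)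
    (E : X → ℝ)
    -- E is bounded from below
    (hEbdd : ∃ m : ℝ, ∀ x : X, m ≤ E x)
    -- E is (sequentially) lower semicontinuous w.r.t. the weak topology of X
    (hElsc : ∀ (x : X) (u : ℕ → X), WeakTendsto u x →
      ((E x : EReal)) ≤ liminf (fun n => ((E (u n) : EReal))) atTop)
    -- E is continuous w.r.t. the norm topology of X
    (hEcont : Continuous E)
    (p : ℝ) (hp : 1 < p)
    (lam : ℕ → ℝ) (hlam_pos : ∀ n, 0 < lam n) (hlam : Tendsto lam atTop atTop)
    (A : ℕ → Set X)
    -- the penalized functionals with right-hand side f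
    (Fn : (X →L[ℝ] ℝ) → ℕ → X → EReal)
    (hFn : ∀ (f : X →L[ℝ] ℝ) (n : ℕ) (x : X), Fn f n x =
      if x ∈ A n then ((E x + lam n * ‖γ x‖ ^ p - f x : ℝ) : EReal) else ⊤)
    -- the limit functionals with right-hand side f
    (F : (X →L[ℝ] ℝ) → X → EReal)
    (hF : ∀ (f : X →L[ℝ] ℝ) (x : X),
      F f x = if γ x = 0 then ((E x - f x : ℝ) : EReal) else ⊤)
    -- Assumption (A1)
    (hA1 : ∀ x : X, γ x = 0 → ∃ u : ℕ → X, (∀ n, u n ∈ A n) ∧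
      Tendsto u atTop (𝓝 x) ∧
      Tendsto (fun n => lam n * ‖γ (u n)‖ ^ p) atTop (𝓝 0))
    -- the second norm, encoded by an injective dense-range embedding j : X → Y
    (j : X →L[ℝ] Y) (hj_inj : Function.Injective j) (hj_dense : DenseRange j)
    -- Assumption (A4): j is completely continuous
    (hA4 : ∀ (u : ℕ → X) (x : X), WeakTendsto u x →
      Tendsto (fun n => j (u n)) atTop (𝓝 (j x)))
    -- weakly convergent right-hand sides
    (g : ℕ → (Y →L[ℝ] ℝ)) (g₀ : Y →L[ℝ] ℝ)
    (hg : ∀ y : Y, Tendsto (fun n => g n y) atTop (𝓝 (g₀ y))) :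
    -- liminf inequality
    (∀ (x : X) (u : ℕ → X), WeakTendsto u x →
        F (g₀.comp j) x ≤ liminf (fun n => Fn ((g n).comp j) n (u n)) atTop) ∧
      -- recovery sequences
      (∀ x : X, ∃ u : ℕ → X, WeakTendsto u x ∧
        Tendsto (fun n => Fn ((g n).comp j) n (u n)) atTop
          (𝓝 (F (g₀.comp j) x))) := by
  obtain ⟨m, hm⟩ := hEbdd
  -- uniform bound on the norms of the `g n`, by Banach–Steinhaus
  obtain ⟨C, hC⟩ : ∃ C, ∀ n, ‖g n‖ ≤ C := by
    apply banach_steinhaus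
    intro y
    obtain ⟨C, hC⟩ := (hg y).norm.bddAbove_range
    exact ⟨C, fun i => hC ⟨i, rfl⟩⟩
  -- the key continuity property: `g n (y n) → g₀ y₀` whenever `y n → y₀`
  have key : ∀ (y : ℕ → Y) (y₀ : Y), Tendsto y atTop (𝓝 y₀) →
      Tendsto (fun n => g n (y n)) atTop (𝓝 (g₀ y₀)) := by
    intro y y₀ hy
    have h1 : Tendsto (fun n => g n (y n) - g n y₀) atTop (𝓝 0) := by
      apply squeeze_zero_norm (a := fun n => C * ‖y n - y₀‖)
      · intro n
        calc ‖g n (y n) - g n y₀‖ = ‖g n (y n - y₀)‖ := by rw [map_sub]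
          _ ≤ ‖g n‖ * ‖y n - y₀‖ := (g n).le_opNorm _
          _ ≤ C * ‖y n - y₀‖ :=
            mul_le_mul_of_nonneg_right (hC n) (norm_nonneg _)
      · have h2 : Tendsto (fun n => ‖y n - y₀‖) atTop (𝓝 0) :=
          tendsto_iff_norm_sub_tendsto_zero.mp hy
        simpa using h2.const_mul C
    have h3 := h1.add (hg y₀)
    simpa using h3
  constructor
  · -- liminf inequality
    intro x u hu
    rw [le_liminf_iff]
    intro b hb
    rw [hF] at hb
    have hc : Tendsto (fun n => (g n) (j (u n))) atTop (𝓝 (g₀ (j x))) :=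
      key _ _ (hA4 u x hu)
    by_cases hγx : γ x = 0
    · rw [if_pos hγx] at hb
      obtain ⟨r, hbr, hr⟩ := EReal.lt_iff_exists_real_btwn.mp hb
      rw [EReal.coe_lt_coe_iff] at hr
      simp only [ContinuousLinearMap.comp_apply] at hr
      set c := g₀ (j x) with hc_def
      set ε := (E x - c - r) / 2 with hε
      have hεpos : 0 < ε := by simp only [hε]; linarith
      have h1 : ∀ᶠ n in atTop, (g n) (j (u n)) < c + ε :=
        hc.eventually_lt_const (by linarith)
      have h2 : ∀ᶠ n in atTop, (E x - ε : ℝ) < E (u n) := by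
        have hlt : ((E x - ε : ℝ) : EReal) < liminf (fun n => ((E (u n) : EReal))) atTop :=
          lt_of_lt_of_le (by exact_mod_cast (show E x - ε < E x by linarith)) (hElsc x u hu)
        filter_upwards [eventually_lt_of_lt_liminf hlt] with n hn
        exact_mod_cast hn
      filter_upwards [h1, h2] with n h1n h2n
      rw [hFn]
      split_ifs with hA
      · refine hbr.trans_le ?_
        rw [EReal.coe_le_coe_iff]
        have hpen : 0 ≤ lam n * ‖γ (u n)‖ ^ p :=
          mul_nonneg (hlam_pos n).le (Real.rpow_nonneg (norm_nonneg _) p)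
        have hfx : ((g n).comp j) (u n) = g n (j (u n)) := rfl
        rw [hfx]
        linarith
      · exact hbr.trans_le le_top
    · rw [if_neg hγx] at hb
      obtain ⟨r, hbr, -⟩ := EReal.lt_iff_exists_real_btwn.mp hb
      obtain ⟨φ, hφ1, hφ2⟩ := exists_dual_vector ℝ (γ x) (norm_ne_zero_iff.mpr hγx)
      have hγpos : (0 : ℝ) < ‖γ x‖ := norm_pos_iff.mpr hγx
      have hφu : Tendsto (fun n => φ (γ (u n))) atTop (𝓝 ‖γ x‖) := by
        have h := hu (φ.comp γ)
        simp only [ContinuousLinearMap.comp_apply] at h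
        rw [hφ2] at h
        exact_mod_cast h
      have hnorm : ∀ᶠ n in atTop, ‖γ x‖ / 2 < ‖γ (u n)‖ := by
        filter_upwards [hφu.eventually_const_lt (show ‖γ x‖ / 2 < ‖γ x‖ by linarith)] with n hn
        refine hn.trans_le ?_
        calc φ (γ (u n)) ≤ |φ (γ (u n))| := le_abs_self _
          _ = ‖φ (γ (u n))‖ := (Real.norm_eq_abs _).symm
          _ ≤ ‖φ‖ * ‖γ (u n)‖ := φ.le_opNorm _
          _ = ‖γ (u n)‖ := by rw [hφ1, one_mul]
      have hcb : ∀ᶠ n in atTop, g n (j (u n)) < g₀ (j x) + 1 :=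
        hc.eventually_lt_const (lt_add_one _)
      set K := (‖γ x‖ / 2) ^ p with hK
      have hKp : 0 < K := Real.rpow_pos_of_pos (by linarith) p
      have hev : ∀ᶠ n in atTop, r - m + (g₀ (j x) + 1) < lam n * K :=
        (hlam.atTop_mul_const hKp).eventually_gt_atTop _
      filter_upwards [hnorm, hcb, hev] with n h1 h2 h3
      rw [hFn]
      split_ifs with hA
      · refine hbr.trans_le ?_
        rw [EReal.coe_le_coe_iff]
        have hKle : K ≤ ‖γ (u n)‖ ^ p :=
          Real.rpow_le_rpow (by linarith) h1.le (by linarith)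
        have h4 : lam n * K ≤ lam n * ‖γ (u n)‖ ^ p :=
          mul_le_mul_of_nonneg_left hKle (hlam_pos n).le
        have h5 := hm (u n)
        have hfx : ((g n).comp j) (u n) = g n (j (u n)) := rfl
        rw [hfx]
        linarith
      · exact hbr.trans_le le_top
  · -- recovery sequences
    intro x
    by_cases hγx : γ x = 0
    · obtain ⟨u, huA, hux, hupen⟩ := hA1 x hγx
      have hw : WeakTendsto u x := fun φ => (φ.continuous.tendsto x).comp hux
      refine ⟨u, hw, ?_⟩
      have hc : Tendsto (fun n => g n (j (u n))) atTop (𝓝 (g₀ (j x))) :=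
        key _ _ ((j.continuous.tendsto x).comp hux)
      have hE : Tendsto (fun n => E (u n)) atTop (𝓝 (E x)) :=
        (hEcont.tendsto x).comp hux
      rw [hF, if_pos hγx]
      have hreal : Tendsto
          (fun n => (E (u n) + lam n * ‖γ (u n)‖ ^ p - g n (j (u n)) : ℝ)) atTop
          (𝓝 (E x - g₀ (j x))) := by
        have h := (hE.add hupen).sub hc
        simpa using h
      have h2 := EReal.tendsto_coe.mpr hreal
      refine Tendsto.congr (fun n => ?_) h2
      rw [hFn, if_pos (huA n)]
      rfl
    · refine ⟨fun _ => x, fun φ => tendsto_const_nhds, ?_⟩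
      rw [hF, if_neg hγx]
      rw [EReal.tendsto_nhds_top_iff_real]
      intro M
      have hcb : ∀ᶠ n in atTop, g n (j x) < g₀ (j x) + 1 :=
        (hg (j x)).eventually_lt_const (lt_add_one _)
      have hKp : 0 < ‖γ x‖ ^ p := Real.rpow_pos_of_pos (norm_pos_iff.mpr hγx) p
      have hev : ∀ᶠ n in atTop, M - E x + (g₀ (j x) + 1) < lam n * ‖γ x‖ ^ p :=
        (hlam.atTop_mul_const hKp).eventually_gt_atTop _
      filter_upwards [hcb, hev] with n h2 h3
      rw [hFn]
      split_ifs with hA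
      · rw [EReal.coe_lt_coe_iff]
        have hfx : ((g n).comp j) x = g n (j x) := rfl
        rw [hfx]
        linarith
      · exact EReal.coe_lt_top M
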